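/- Conjugate function of the aggregation function in the Eisenberg–Noe model with central clearing: for every z ∈ ℝ^{d+1}_+, sup_{x ∈ ℝ^{d+1}} ( Λ̃(x) − zᵀx ) = Σ_{i=1}^d [ ℓ_{i0}(1 − z_i) + ℓ_{i(d+1)}(z_{d+1} − z_i) ]⁺ + ( Σ_{i=1}^d ℓ_{(d+1)i}( z_i − z_{d+1} ) )⁺, where r⁺ := max{r,0}. -/

import Mathlib

open scoped ENNReal

noncomputable section

namespace EisenbergNoeCCP

/-- Net interbank liability `∑_{j=1}^d ℓ_{ij} − ∑_{j=1}^d ℓ_{ji}` of institution `i`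
(institutions are the nodes `1,…,d`, encoded as `i.succ` for `i : Fin d`; node `0` is
society). -/
def net {d : ℕ} (ℓ : Fin (d + 1) → Fin (d + 1) → ℝ) (i : Fin d) : ℝ :=
  ∑ j : Fin d, ℓ i.succ j.succ - ∑ j : Fin d, ℓ j.succ i.succ

/-- Liability `ℓ_{i(d+1)} = (∑ⱼ ℓ_{ij} − ∑ⱼ ℓ_{ji})⁺` of institution `i` to the CCP. -/
def toCCP {d : ℕ} (ℓ : Fin (d + 1) → Fin (d + 1) → ℝ) (i : Fin d) : ℝ :=
  max (net ℓ i) 0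

/-- Liability `ℓ_{(d+1)i} = (∑ⱼ ℓ_{ij} − ∑ⱼ ℓ_{ji})⁻` of the CCP to institution `i`. -/
def fromCCP {d : ℕ} (ℓ : Fin (d + 1) → Fin (d + 1) → ℝ) (i : Fin d) : ℝ :=
  max (-net ℓ i) 0

/-- Feasibility for the linear program `P̃(x)` of the Eisenberg–Noe model with central
clearing; the state is `(x, xC) ∈ ℝ^{d+1}` and the payment vector is `(p, pC)`,
where the last coordinate belongs to the CCP (node `d+1`). -/
def Feasible {d : ℕ} (ℓ : Fin (d + 1) → Fin (d + 1) → ℝ) (x : Fin d → ℝ) (xC : ℝ)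
    (p : Fin d → ℝ) (pC : ℝ) : Prop :=
  (∀ i, p i ≤ x i + (fromCCP ℓ i / ∑ j, fromCCP ℓ j) * pC) ∧
    pC ≤ xC + ∑ i, (toCCP ℓ i / (toCCP ℓ i + ℓ i.succ 0)) * p i ∧
    (∀ i, 0 ≤ p i ∧ p i ≤ toCCP ℓ i + ℓ i.succ 0) ∧
    0 ≤ pC ∧ pC ≤ ∑ i, fromCCP ℓ i

/-- The objective `∑_{i=1}^d (ℓ_{i0}/(ℓ_{i0} + ℓ_{i(d+1)})) pᵢ` of `P̃(x)`. -/
def obj {d : ℕ} (ℓ : Fin (d + 1) → Fin (d + 1) → ℝ) (p : Fin d → ℝ) : ℝ :=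
  ∑ i, (ℓ i.succ 0 / (ℓ i.succ 0 + toCCP ℓ i)) * p i

/-- The clearing fixed-point equations of the Eisenberg–Noe model with central
clearing. -/
def Clearing {d : ℕ} (ℓ : Fin (d + 1) → Fin (d + 1) → ℝ) (x : Fin d → ℝ) (xC : ℝ)
    (p : Fin d → ℝ) (pC : ℝ) : Prop :=
  (∀ i, p i = min (toCCP ℓ i + ℓ i.succ 0)
      (x i + pC * (fromCCP ℓ i / ∑ j, fromCCP ℓ j))) ∧
    pC = min (∑ i, fromCCP ℓ i)
      (xC + ∑ i, p i * (toCCP ℓ i / (toCCP ℓ i + ℓ i.succ 0)))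

/-- The aggregation function `Λ̃(x)` of the Eisenberg–Noe model with central
clearing: the optimal value of `P̃(x)` (equal to `−∞ = ⊥` if `P̃(x)` is infeasible). -/
def aggCCP {d : ℕ} (ℓ : Fin (d + 1) → Fin (d + 1) → ℝ) (x : Fin d → ℝ) (xC : ℝ) :
    EReal :=
  ⨆ (p : Fin d → ℝ) (pC : ℝ) (_ : Feasible ℓ x xC p pC), ((obj ℓ p : ℝ) : EReal)

/-- Weight of society's claim in the objective. -/
def bcoef {d : ℕ} (ℓ : Fin (d + 1) → Fin (d + 1) → ℝ) (i : Fin d) : ℝ :=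
  ℓ i.succ 0 / (ℓ i.succ 0 + toCCP ℓ i)

/-- Weight of the CCP's claim. -/
def acoef {d : ℕ} (ℓ : Fin (d + 1) → Fin (d + 1) → ℝ) (i : Fin d) : ℝ :=
  toCCP ℓ i / (toCCP ℓ i + ℓ i.succ 0)

/-- Relative weight of institution `i` among the CCP's creditors. -/
def ccoef {d : ℕ} (ℓ : Fin (d + 1) → Fin (d + 1) → ℝ) (i : Fin d) : ℝ :=
  fromCCP ℓ i / ∑ j, fromCCP ℓ j

/-- Reduced objective coefficient for `p i`. -/
def beta {d : ℕ} (ℓ : Fin (d + 1) → Fin (d + 1) → ℝ) (z : Fin d → ℝ) (zC : ℝ)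
    (i : Fin d) : ℝ :=
  bcoef ℓ i - z i + zC * acoef ℓ i

lemma toCCP_nonneg {d : ℕ} (ℓ : Fin (d + 1) → Fin (d + 1) → ℝ) (i : Fin d) :
    0 ≤ toCCP ℓ i := le_max_right _ _

lemma fromCCP_nonneg {d : ℕ} (ℓ : Fin (d + 1) → Fin (d + 1) → ℝ) (i : Fin d) :
    0 ≤ fromCCP ℓ i := le_max_right _ _

lemma Lpos {d : ℕ} (ℓ : Fin (d + 1) → Fin (d + 1) → ℝ)
    (hto0 : ∀ i : Fin d, 0 < ℓ i.succ 0) (i : Fin d) :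
    0 < toCCP ℓ i + ℓ i.succ 0 :=
  add_pos_of_nonneg_of_pos (toCCP_nonneg ℓ i) (hto0 i)

lemma Lbeta {d : ℕ} (ℓ : Fin (d + 1) → Fin (d + 1) → ℝ)
    (hto0 : ∀ i : Fin d, 0 < ℓ i.succ 0) (z : Fin d → ℝ) (zC : ℝ) (i : Fin d) :
    (toCCP ℓ i + ℓ i.succ 0) * beta ℓ z zC i
      = ℓ i.succ 0 * (1 - z i) + toCCP ℓ i * (zC - z i) := by
  have h : toCCP ℓ i + ℓ i.succ 0 ≠ 0 := (Lpos ℓ hto0 i).ne'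
  have h' : ℓ i.succ 0 + toCCP ℓ i ≠ 0 := by rw [add_comm]; exact h
  unfold beta bcoef acoef
  field_simp
  ring

lemma box_mul_le {t T s : ℝ} (h0 : 0 ≤ t) (hT : t ≤ T) : t * s ≤ max (T * s) 0 := by
  rcases le_or_gt 0 s with hs | hs
  · exact le_max_of_le_left (mul_le_mul_of_nonneg_right hT hs)
  · exact le_max_of_le_right (mul_nonpos_of_nonneg_of_nonpos h0 hs.le)

/-- The key algebraic identity: the value of the conjugate at a point where the
constraints are tight, written as a linear function of `(p, pC)`. -/
lemma gEq {d : ℕ} (ℓ : Fin (d + 1) → Fin (d + 1) → ℝ) (z : Fin d → ℝ) (zC : ℝ)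
    (p : Fin d → ℝ) (pC : ℝ) :
    obj ℓ p - (∑ i, z i * (p i - ccoef ℓ i * pC)
        + zC * (pC - ∑ i, acoef ℓ i * p i))
      = ∑ i, p i * beta ℓ z zC i + pC * (∑ i, z i * ccoef ℓ i) - pC * zC := by
  unfold obj beta bcoef
  rw [mul_sub, Finset.mul_sum, Finset.mul_sum]
  rw [show (∑ i, z i * (p i - ccoef ℓ i * pC)) =
      ∑ i, (z i * p i - z i * ccoef ℓ i * pC) from
    Finset.sum_congr rfl fun i _ => by ring]
  simp only [Finset.sum_sub_distrib, Finset.sum_add_distrib, mul_add, mul_sub]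
  ring_nf
  rw [show (∑ i, p i * ℓ i.succ 0 * (ℓ i.succ 0 + toCCP ℓ i)⁻¹)
      = ∑ i, ℓ i.succ 0 * (ℓ i.succ 0 + toCCP ℓ i)⁻¹ * p i from
    Finset.sum_congr rfl fun i _ => by ring]
  rw [show (∑ i, p i * z i) = ∑ i, z i * p i from
    Finset.sum_congr rfl fun i _ => by ring]
  rw [show (∑ i, zC * p i * acoef ℓ i) = ∑ i, zC * acoef ℓ i * p i from
    Finset.sum_congr rfl fun i _ => by ring]
  rw [show (∑ i, pC * z i * ccoef ℓ i) = ∑ i, z i * ccoef ℓ i * pC from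
    Finset.sum_congr rfl fun i _ => by ring]
  ring

lemma Fid {d : ℕ} (ℓ : Fin (d + 1) → Fin (d + 1) → ℝ)
    (hCCP : 0 < ∑ j, fromCCP ℓ j) (z : Fin d → ℝ) (zC : ℝ) :
    (∑ j, fromCCP ℓ j) * ((∑ i, z i * ccoef ℓ i) - zC)
      = ∑ i, fromCCP ℓ i * (z i - zC) := by
  have hF : (∑ j, fromCCP ℓ j) ≠ 0 := hCCP.ne'
  rw [mul_sub, Finset.mul_sum]
  rw [show (∑ i, (∑ j, fromCCP ℓ j) * (z i * ccoef ℓ i)) = ∑ i, fromCCP ℓ i * z i from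
    Finset.sum_congr rfl fun i _ => by unfold ccoef; field_simp]
  rw [show (∑ i, fromCCP ℓ i * (z i - zC)) = ∑ i, (fromCCP ℓ i * z i - fromCCP ℓ i * zC) from
    Finset.sum_congr rfl fun i _ => by ring]
  rw [Finset.sum_sub_distrib, ← Finset.sum_mul]

/-- Upper bound for the reduced objective over the box constraints. -/
lemma g_le {d : ℕ} (ℓ : Fin (d + 1) → Fin (d + 1) → ℝ)
    (hto0 : ∀ i : Fin d, 0 < ℓ i.succ 0) (hCCP : 0 < ∑ j, fromCCP ℓ j)
    (z : Fin d → ℝ) (zC : ℝ) (p : Fin d → ℝ) (pC : ℝ)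
    (hp : ∀ i, 0 ≤ p i ∧ p i ≤ toCCP ℓ i + ℓ i.succ 0)
    (hpC : 0 ≤ pC) (hpCF : pC ≤ ∑ j, fromCCP ℓ j) :
    ∑ i, p i * beta ℓ z zC i + pC * (∑ i, z i * ccoef ℓ i) - pC * zC
      ≤ ∑ i, max (ℓ i.succ 0 * (1 - z i) + toCCP ℓ i * (zC - z i)) 0
        + max (∑ i, fromCCP ℓ i * (z i - zC)) 0 := by
  have h1 : ∑ i, p i * beta ℓ z zC i
      ≤ ∑ i, max (ℓ i.succ 0 * (1 - z i) + toCCP ℓ i * (zC - z i)) 0 :=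
    Finset.sum_le_sum fun i _ => by
      have h := box_mul_le (hp i).1 (hp i).2 (s := beta ℓ z zC i)
      rwa [Lbeta ℓ hto0 z zC i] at h
  have h2 : pC * ((∑ i, z i * ccoef ℓ i) - zC)
      ≤ max (∑ i, fromCCP ℓ i * (z i - zC)) 0 := by
    have h := box_mul_le hpC hpCF (s := (∑ i, z i * ccoef ℓ i) - zC)
    rwa [Fid ℓ hCCP z zC] at h
  nlinarith [h1, h2, sq_nonneg pC]

/-- The conjugate value is attained. -/
lemma attain {d : ℕ} (ℓ : Fin (d + 1) → Fin (d + 1) → ℝ)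
    (hto0 : ∀ i : Fin d, 0 < ℓ i.succ 0) (hCCP : 0 < ∑ j, fromCCP ℓ j)
    (z : Fin d → ℝ) (zC : ℝ) :
    ∃ x xC p pC, Feasible ℓ x xC p pC ∧
      obj ℓ p - (∑ i, z i * x i + zC * xC)
        = ∑ i, max (ℓ i.succ 0 * (1 - z i) + toCCP ℓ i * (zC - z i)) 0
          + max (∑ i, fromCCP ℓ i * (z i - zC)) 0 := by
  classical
  set P : Fin d → ℝ :=
    fun i => if 0 ≤ beta ℓ z zC i then toCCP ℓ i + ℓ i.succ 0 else 0 with hPdef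
  set Q : ℝ :=
    if 0 ≤ (∑ i, z i * ccoef ℓ i) - zC then ∑ j, fromCCP ℓ j else 0 with hQdef
  refine ⟨fun i => P i - ccoef ℓ i * Q, Q - ∑ i, acoef ℓ i * P i, P, Q, ?_, ?_⟩
  · refine ⟨fun i => ?_, ?_, fun i => ?_, ?_, ?_⟩
    · show P i ≤ P i - ccoef ℓ i * Q + ccoef ℓ i * Q
      linarith
    · show Q ≤ Q - ∑ i, acoef ℓ i * P i + ∑ i, acoef ℓ i * P i
      linarith
    · have hL := (Lpos ℓ hto0 i).le
      refine ⟨?_, ?_⟩ <;> (simp only [hPdef]; split_ifs <;> linarith)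
    · simp only [hQdef]; split_ifs <;> linarith [hCCP.le]
    · simp only [hQdef]; split_ifs <;> linarith [hCCP.le]
  · show obj ℓ P - (∑ i, z i * (P i - ccoef ℓ i * Q)
        + zC * (Q - ∑ i, acoef ℓ i * P i)) = _
    rw [gEq]
    have hterm : ∀ i ∈ Finset.univ, P i * beta ℓ z zC i
        = max (ℓ i.succ 0 * (1 - z i) + toCCP ℓ i * (zC - z i)) 0 := fun i _ => by
      rw [← Lbeta ℓ hto0 z zC i]
      simp only [hPdef]
      split_ifs with h
      · exact (max_eq_left (mul_nonneg (Lpos ℓ hto0 i).le h)).symm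
      · rw [zero_mul,
          max_eq_right (mul_nonpos_of_nonneg_of_nonpos (Lpos ℓ hto0 i).le (not_le.1 h).le)]
    rw [Finset.sum_congr rfl hterm]
    have hQ2 : Q * (∑ i, z i * ccoef ℓ i) - Q * zC
        = max (∑ i, fromCCP ℓ i * (z i - zC)) 0 := by
      have e : Q * (∑ i, z i * ccoef ℓ i) - Q * zC
          = Q * ((∑ i, z i * ccoef ℓ i) - zC) := by ring
      rw [e, ← Fid ℓ hCCP z zC]
      simp only [hQdef]
      split_ifs with h
      · exact (max_eq_left (mul_nonneg hCCP.le h)).symm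
      · rw [zero_mul,
          max_eq_right (mul_nonpos_of_nonneg_of_nonpos hCCP.le (not_le.1 h).le)]
    linarith [hQ2]

/-- Conjugate function of the aggregation function in the
Eisenberg–Noe model with central clearing. -/
theorem ccp_conjugate
    (d : ℕ) (hd : 1 ≤ d) (ℓ : Fin (d + 1) → Fin (d + 1) → ℝ)
    (hℓnn : ∀ i j, 0 ≤ ℓ i j)
    (hsoc : ∀ i : Fin d, ℓ 0 i.succ = 0)
    (hto0 : ∀ i : Fin d, 0 < ℓ i.succ 0)
    (hself : ∀ i, ℓ i i = 0)
    (hCCP : 0 < ∑ j, fromCCP ℓ j)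
    (z : Fin d → ℝ) (zC : ℝ) (hz : ∀ i, 0 ≤ z i) (hzC : 0 ≤ zC) :
    (⨆ (x : Fin d → ℝ) (xC : ℝ),
        (aggCCP ℓ x xC - ((∑ i, z i * x i + zC * xC : ℝ) : EReal))) =
      ((∑ i, max (ℓ i.succ 0 * (1 - z i) + toCCP ℓ i * (zC - z i)) 0 +
          max (∑ i, fromCCP ℓ i * (z i - zC)) 0 : ℝ) : EReal) := by
  refine le_antisymm (iSup_le fun x => iSup_le fun xC => ?_) ?_
  · rw [EReal.sub_le_iff_le_add (Or.inl (EReal.coe_ne_bot _))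
      (Or.inl (EReal.coe_ne_top _)), ← EReal.coe_add]
    rw [aggCCP]
    refine iSup_le fun p => iSup_le fun pC => iSup_le fun hf => ?_
    rw [EReal.coe_le_coe_iff]
    obtain ⟨hf1, hf2, hf3, hf4, hf5⟩ := hf
    have h1 : ∑ i, z i * (p i - ccoef ℓ i * pC) ≤ ∑ i, z i * x i :=
      Finset.sum_le_sum fun i _ =>
        mul_le_mul_of_nonneg_left
          (by have h := hf1 i; simp only [ccoef]; linarith) (hz i)
    have h2 : zC * (pC - ∑ i, acoef ℓ i * p i) ≤ zC * xC :=
      mul_le_mul_of_nonneg_left (by simp only [acoef]; linarith [hf2]) hzC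
    have h3 := gEq ℓ z zC p pC
    have h4 := g_le ℓ hto0 hCCP z zC p pC hf3 hf4 hf5
    linarith
  · obtain ⟨x, xC, p, pC, hfeas, hval⟩ := attain ℓ hto0 hCCP z zC
    refine le_iSup_of_le x (le_iSup_of_le xC ?_)
    calc ((∑ i, max (ℓ i.succ 0 * (1 - z i) + toCCP ℓ i * (zC - z i)) 0 +
          max (∑ i, fromCCP ℓ i * (z i - zC)) 0 : ℝ) : EReal)
        = ((obj ℓ p - (∑ i, z i * x i + zC * xC) : ℝ) : EReal) := by rw [hval]
      _ = ((obj ℓ p : ℝ) : EReal) - ((∑ i, z i * x i + zC * xC : ℝ) : EReal) :=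
          EReal.coe_sub _ _
      _ ≤ aggCCP ℓ x xC - ((∑ i, z i * x i + zC * xC : ℝ) : EReal) :=
          EReal.sub_le_sub
            (le_iSup_of_le p (le_iSup_of_le pC (le_iSup_of_le hfeas le_rfl)))
            le_rfl


end EisenbergNoeCCP
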